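/- The satisfiability problem SAT for propositional logic reduces in polynomial time to the single-agent S5 plan existence problem with modal-depth-1 preconditions and no postconditions; hence the latter problem is NP-hard. -/

import Mathlib

/-- Modal formulas over a set of agents, atoms indexed by ℕ. -/
inductive Form (Agent : Type) : Type
  | falsum : Form Agent
  | atom : ℕ → Form Agent
  | neg : Form Agent → Form Agent
  | conj : Form Agent → Form Agent → Form Agent
  | know : Agent → Form Agent → Form Agent

/-- A Kripke model: accessibility relations and valuation. -/
structure KripkeModel (Agent : Type) (W : Type) where
  R : Agent → W → W → Prop
  V : W → ℕ → Prop

/-- Satisfaction of a modal formula at a world. -/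
def KripkeModel.sat {Agent W : Type} (M : KripkeModel Agent W) : W → Form Agent → Prop
  | _, .falsum => False
  | w, .atom p => M.V w p
  | w, .neg φ => ¬ M.sat w φ
  | w, .conj φ ψ => M.sat w φ ∧ M.sat w ψ
  | w, .know i φ => ∀ v, M.R i w v → M.sat v φ

/-- An event model: pointedless Kripke frame with preconditions on events. -/
structure EventModel (Agent : Type) (E : Type) where
  Q : Agent → E → E → Prop
  pre : E → Form Agent

/-- The product update of a Kripke model with an event model: worlds are the
pairs surviving the preconditions, accessibility is componentwise, valuation
is inherited. -/
def productModel {Agent W E : Type} (M : KripkeModel Agent W) (A : EventModel Agent E) :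
    KripkeModel Agent {p : W × E // M.sat p.1 (A.pre p.2)} where
  R i x y := M.R i x.1.1 y.1.1 ∧ A.Q i x.1.2 y.1.2
  V x n := M.V x.1.1 n

/-- An epistemic state: a pointed Kripke model. -/
structure EpiState (Agent : Type) where
  W : Type
  M : KripkeModel Agent W
  w : W

/-- An epistemic action: a pointed event model. -/
structure EpiAction (Agent : Type) where
  E : Type
  A : EventModel Agent E
  e : E

/-- An action applies to a state when the designated event's precondition
holds at the designated world. -/
def EpiAction.applies {Agent : Type} (a : EpiAction Agent) (s : EpiState Agent) : Prop :=
  s.M.sat s.w (a.A.pre a.e)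

/-- The product update of an epistemic state by an applicable epistemic action. -/
def EpiState.update {Agent : Type} (s : EpiState Agent) (a : EpiAction Agent) (h : a.applies s) :
    EpiState Agent where
  W := {p : s.W × a.E // s.M.sat p.1 (a.A.pre p.2)}
  M := productModel s.M a.A
  w := ⟨(s.w, a.e), h⟩

/-- `Exec s α t` : the sequence of actions `α` applies (left to right) to `s`
and results in `t`. -/
inductive Exec {Agent : Type} : EpiState Agent → List (EpiAction Agent) → EpiState Agent → Prop
  | nil (s : EpiState Agent) : Exec s [] s
  | snoc {s t : EpiState Agent} {α : List (EpiAction Agent)} (a : EpiAction Agent)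
      (hst : Exec s α t) (h : a.applies t) : Exec s (α ++ [a]) (t.update a h)

/-- `Z` is a bisimulation between `M` and `M'`. -/
def Bisim {Agent W W' : Type} (M : KripkeModel Agent W) (M' : KripkeModel Agent W')
    (Z : W → W' → Prop) : Prop :=
  ∀ w w', Z w w' →
    (∀ p, M.V w p ↔ M'.V w' p) ∧
    (∀ i v, M.R i w v → ∃ v', M'.R i w' v' ∧ Z v v') ∧
    (∀ i v', M'.R i w' v' → ∃ v, M.R i w v ∧ Z v v')

/-- Two pointed models are bisimilar. -/
def Bisimilar {Agent : Type} (s t : EpiState Agent) : Prop :=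
  ∃ Z : s.W → t.W → Prop, Bisim s.M t.M Z ∧ Z s.w t.w

/-- A formula is propositional (modal depth 0). -/
def Form.IsProp {Agent : Type} : Form Agent → Prop
  | .falsum => True
  | .atom _ => True
  | .neg φ => φ.IsProp
  | .conj φ ψ => φ.IsProp ∧ ψ.IsProp
  | .know _ _ => False

/-- Modal depth of a formula. -/
def Form.depth {Agent : Type} : Form Agent → ℕ
  | .falsum => 0
  | .atom _ => 0
  | .neg φ => φ.depth
  | .conj φ ψ => max φ.depth ψ.depth
  | .know _ φ => φ.depth + 1

/-- The submodel of a state induced by a set of worlds containing the point. -/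
def EpiState.sub {Agent : Type} (s : EpiState Agent) (S : Set s.W) (h : s.w ∈ S) : EpiState Agent where
  W := S
  M := { R := fun i x y => s.M.R i x.1 y.1, V := fun x n => s.M.V x.1 n }
  w := ⟨s.w, h⟩

/-- Propositional evaluation of a formula under an assignment. -/
def propEval {Agent : Type} (v : ℕ → Prop) : Form Agent → Prop
  | .falsum => False
  | .atom p => v p
  | .neg φ => ¬ propEval v φ
  | .conj φ ψ => propEval v φ ∧ propEval v ψ
  | .know _ φ => propEval v φ

/-- The atoms occurring in a formula. -/
def Form.atoms {Agent : Type} : Form Agent → Finset ℕ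
  | .falsum => ∅
  | .atom p => {p}
  | .neg φ => φ.atoms
  | .conj φ ψ => φ.atoms ∪ ψ.atoms
  | .know _ φ => φ.atoms

/-- The translation replacing each atom `p` by `¬K¬p`. -/
def satTrans : Form Unit → Form Unit
  | .falsum => .falsum
  | .atom p => .neg (.know () (.neg (.atom p)))
  | .neg φ => .neg (satTrans φ)
  | .conj φ ψ => .conj (satTrans φ) (satTrans ψ)
  | .know i φ => .know i (satTrans φ)

/-- The initial S5 state of the SAT reduction: worlds `{0} ∪ P`
(world `none` is the extra world `0`), total accessibility, atom `p` true
exactly at world `p`, designated world `0`. -/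
def satInit (P : Finset ℕ) : EpiState Unit where
  W := Option {p : ℕ // p ∈ P}
  M := { R := fun _ _ _ => True,
         V := fun w q => ∃ hq : q ∈ P, w = some ⟨q, hq⟩ }
  w := none

/-- The single-event self-loop S5 action deleting world `p`
(precondition `¬p`). -/
def delAction (p : ℕ) : EpiAction Unit where
  E := Unit
  A := { Q := fun _ _ _ => True, pre := fun _ => .neg (.atom p) }
  e := ()


open Classical in
lemma satTrans_sat (t : EpiState Unit) (tot : ∀ x y, t.M.R () x y)
    (ψ : Form Unit) (hψ : ψ.IsProp) (w : t.W) :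
    t.M.sat w (satTrans ψ) ↔ propEval (fun q => ∃ u, t.M.V u q) ψ := by
  revert hψ
  induction ψ with
  | falsum => intro _; simp [satTrans, KripkeModel.sat, propEval]
  | atom p =>
      intro _
      simp only [satTrans, KripkeModel.sat, propEval]
      constructor
      · intro h
        by_contra h'
        push_neg at h'
        exact h (fun v _ => h' v)
      · rintro ⟨u, hu⟩ h
        exact h u (tot w u) hu
  | neg φ ih =>
      intro hψ
      simp only [satTrans, KripkeModel.sat, propEval]
      exact not_congr (ih hψ)
  | conj φ ψ ih1 ih2 =>
      intro hψ
      simp only [satTrans, KripkeModel.sat, propEval]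
      exact and_congr (ih1 hψ.1) (ih2 hψ.2)
  | know i φ ih =>
      intro hψ
      exact absurd hψ (by simp [Form.IsProp])

lemma propEval_congr {v v' : ℕ → Prop} (ψ : Form Unit)
    (h : ∀ q ∈ ψ.atoms, (v q ↔ v' q)) : propEval v ψ ↔ propEval v' ψ := by
  induction ψ with
  | falsum => exact Iff.rfl
  | atom p => exact h p (by simp [Form.atoms])
  | neg φ ih => exact not_congr (ih h)
  | conj φ ψ ih1 ih2 =>
      exact and_congr (ih1 fun q hq => h q (by simp [Form.atoms, hq]))
        (ih2 fun q hq => h q (by simp [Form.atoms, hq]))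
  | know i φ ih => exact ih h

lemma exec_tot {s t : EpiState Unit} {α : List (EpiAction Unit)}
    (he : Exec s α t) (hs : ∀ x y, s.M.R () x y)
    (hα : ∀ a ∈ α, ∃ p, a = delAction p) : ∀ x y, t.M.R () x y := by
  induction he with
  | nil => exact hs
  | @snoc t' α' a hst h ih =>
      intro x y
      obtain ⟨p, rfl⟩ := hα a (by simp)
      exact ⟨ih (fun a' ha' => hα a' (by simp [ha'])) x.1.1 y.1.1, trivial⟩

/-- Invariant maintained along the reduction's plans. -/
structure SatInv (P : Finset ℕ) (t : EpiState Unit) (D : Set ℕ) : Prop where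
  tot : ∀ x y, t.M.R () x y
  point : ∀ q, ¬ t.M.V t.w q
  atomic : ∀ u q q', t.M.V u q → t.M.V u q' → q = q'
  exist : ∀ q, (∃ u, t.M.V u q) ↔ (q ∈ P ∧ q ∉ D)

lemma build (P : Finset ℕ) (l : List ℕ) :
    ∃ t, Exec (satInit P) (l.map delAction) t ∧ SatInv P t {q | q ∈ l} := by
  induction l using List.reverseRecOn with
  | nil =>
      refine ⟨satInit P, Exec.nil _, ?_, ?_, ?_, ?_⟩
      · intro x y; trivial
      · rintro q ⟨hq, h⟩; exact Option.some_ne_none _ h.symm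
      · rintro u q q' ⟨hq, rfl⟩ ⟨hq', h⟩
        exact congrArg Subtype.val (Option.some.inj h)
      · intro q
        constructor
        · rintro ⟨u, hq, rfl⟩; exact ⟨hq, by simp⟩
        · rintro ⟨hq, -⟩; exact ⟨some ⟨q, hq⟩, hq, rfl⟩
  | append_singleton l p ih =>
      obtain ⟨t, he, inv⟩ := ih
      have hap : (delAction p).applies t := inv.point p
      refine ⟨t.update _ hap, ?_, ?_, ?_, ?_, ?_⟩
      · rw [List.map_append]
        exact Exec.snoc _ he hap
      · intro x y
        exact ⟨inv.tot _ _, trivial⟩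
      · intro q
        exact inv.point q
      · rintro ⟨⟨u, _⟩, hu⟩ q q' h1 h2
        exact inv.atomic u q q' h1 h2
      · intro q
        constructor
        · rintro ⟨⟨⟨u, _⟩, hu⟩, hq⟩
          have hq' : t.M.V u q := hq
          have h := (inv.exist q).1 ⟨u, hq'⟩
          refine ⟨h.1, ?_⟩
          simp only [Set.mem_setOf_eq, List.mem_append, List.mem_singleton]
          rintro (hl | rfl)
          · exact h.2 hl
          · exact hu hq'
        · rintro ⟨hqP, hq⟩
          simp only [Set.mem_setOf_eq, List.mem_append, List.mem_singleton, not_or] at hq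
          obtain ⟨u, hu⟩ := (inv.exist q).2 ⟨hqP, hq.1⟩
          refine ⟨⟨⟨u, ()⟩, fun hp => hq.2 (inv.atomic u q p hu hp)⟩, hu⟩

/-- correctness of the polynomial-time SAT reduction: a
propositional formula `φ` over atoms `P` is satisfiable iff the described
single-agent S5 planning instance (depth-1 preconditions, no postconditions)
has a plan; hence S5 plan existence is NP-hard. -/
theorem sat_reduces_to_s5_plan_existence (P : Finset ℕ) (φ : Form Unit)
    (hprop : φ.IsProp) (hatoms : φ.atoms ⊆ P) :
    (∃ v : ℕ → Prop, propEval v φ) ↔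
    (∃ (α : List (EpiAction Unit)) (t : EpiState Unit),
        (∀ a ∈ α, ∃ p ∈ P, a = delAction p) ∧
        Exec (satInit P) α t ∧ t.M.sat t.w (satTrans φ)) := by
  classical
  constructor
  · rintro ⟨v, hv⟩
    obtain ⟨t, he, inv⟩ := build P (P.toList.filter fun p => ¬ v p)
    refine ⟨_, t, ?_, he, ?_⟩
    · intro a ha
      simp only [List.mem_map, List.mem_filter, Finset.mem_toList] at ha
      obtain ⟨p, ⟨hp, -⟩, rfl⟩ := ha
      exact ⟨p, hp, rfl⟩
    · rw [satTrans_sat t inv.tot φ hprop]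
      rw [propEval_congr φ (v' := v)]
      · exact hv
      · intro q hq
        have hqP : q ∈ P := hatoms hq
        rw [inv.exist q]
        simp only [Set.mem_setOf_eq, List.mem_filter, Finset.mem_toList, hqP,
          true_and, decide_eq_true_eq]
        by_cases hvq : v q <;> simp [hvq]
  · rintro ⟨α, t, hα, he, hsat⟩
    have tot : ∀ x y, t.M.R () x y :=
      exec_tot he (fun _ _ => trivial) (fun a ha => (hα a ha).imp fun p hp => hp.2)
    exact ⟨_, (satTrans_sat t tot φ hprop t.w).1 hsat⟩
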